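/- arXiv:1304.1731 — 5 statements merged into one kernel-verified Lean document; each statement's English description precedes it below -/
import Mathlib

section
/- Plancherel formula over GF(q): for f, g : G → GF(q), Σ_{x∈G} f(x)·ḡ(x) = (|G| mod p)^{-1} Σ_{α∈G} f̂(α)·(ĝ(α))‾, where ȳ = y^{p^n}. -/
/-- Plancherel formula over `GF(q)`:
`∑ x, f x * conj (g x) = (|G| mod p)⁻¹ * ∑ α, f̂ α * conj (ĝ α)`,
where `conj y = y ^ (p ^ n)`. -/
theorem plancherel (p n : ℕ) (hp : Nat.Prime p) (hn : n ≠ 0)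
    (F : Type*) [Field F] [Fintype F] (hF : Fintype.card F = p ^ (2 * n))
    (G : Type*) [AddCommGroup G] [Fintype G]
    (hexp : ∀ x : G, (p ^ n + 1) • x = 0)
    (χ : G → G → F)
    (hadd : ∀ α x y : G, χ α (x + y) = χ α x * χ α y)
    (hroot : ∀ α x : G, χ α x ^ (p ^ n + 1) = 1)
    (hsymm : ∀ α x : G, χ α x = χ x α)
    (hinj : ∀ α : G, (∀ x : G, χ α x = 1) → α = 0)
    (f g : G → F) :
    ∑ x : G, f x * (g x) ^ p ^ n =
      (Fintype.card G : F)⁻¹ *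
        ∑ α : G, (∑ x : G, f x * χ α x) * ((∑ x : G, g x * χ α x)) ^ p ^ n := by
  classical
  -- the characteristic of F is p
  have hchar : ringChar F = p := by
    have hrp : (ringChar F).Prime := CharP.char_is_prime F _
    have h1 : (ringChar F : ℕ) ∣ Fintype.card F := by
      rw [← CharP.cast_eq_zero_iff F (ringChar F)]
      exact FiniteField.cast_card_eq_zero F
    rw [hF] at h1
    exact (Nat.prime_dvd_prime_iff_eq hrp hp).mp (hrp.dvd_of_dvd_pow h1)
  haveI : CharP F p := hchar ▸ ringChar.charP F
  haveI : ExpChar F p := ExpChar.prime hp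
  -- p does not divide |G|
  have hpG : ¬ (p ∣ Fintype.card G) := by
    intro hdvd
    haveI := Fact.mk hp
    obtain ⟨x, hx⟩ := exists_prime_addOrderOf_dvd_card p hdvd
    have h2 : addOrderOf x ∣ p ^ n + 1 := addOrderOf_dvd_of_nsmul_eq_zero (hexp x)
    rw [hx] at h2
    have h3 : p ∣ p ^ n := dvd_pow_self p hn
    have : p ∣ 1 := (Nat.dvd_add_right h3).mp h2
    exact hp.one_lt.ne' (Nat.dvd_one.mp this)
  have hcardG : (Fintype.card G : F) ≠ 0 := by
    rw [Ne, CharP.cast_eq_zero_iff F p]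
    exact hpG
  -- χ never vanishes
  have hne : ∀ α x : G, χ α x ≠ 0 := by
    intro α x h
    have h0 := hroot α x
    rw [h, zero_pow (Nat.succ_ne_zero _)] at h0
    exact zero_ne_one h0
  -- χ α 0 = 1
  have hone : ∀ α : G, χ α 0 = 1 := by
    intro α
    have h := hadd α 0 0
    rw [add_zero] at h
    have h2 : χ α 0 * 1 = χ α 0 * χ α 0 := by rw [mul_one]; exact h
    exact (mul_left_cancel₀ (hne α 0) h2).symm
  -- conjugation is inversion on character values
  have hconj : ∀ α x : G, χ α x ^ p ^ n = (χ α x)⁻¹ := by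
    intro α x
    have h := hroot α x
    rw [pow_succ] at h
    exact eq_inv_of_mul_eq_one_left h
  -- subtraction formula
  have hsub : ∀ α x y : G, χ α x * (χ α y)⁻¹ = χ α (x - y) := by
    intro α x y
    have h := hadd α (x - y) y
    rw [sub_add_cancel] at h
    rw [h, mul_inv_cancel_right₀ (hne α y)]
  -- orthogonality
  have horth : ∀ z : G, (∑ α : G, χ α z) = if z = 0 then (Fintype.card G : F) else 0 := by
    intro z
    split_ifs with hz
    · subst hz
      simp [hone]
    · have hβ : ∃ β : G, χ β z ≠ 1 := by
        by_contra h
        push_neg at h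
        exact hz (hinj z (fun x => by rw [hsymm]; exact h x))
      obtain ⟨β, hβ⟩ := hβ
      have key : χ β z * ∑ α : G, χ α z = ∑ α : G, χ α z := by
        rw [Finset.mul_sum]
        refine Fintype.sum_equiv (Equiv.addLeft β) _ _ fun α => ?_
        show χ β z * χ α z = χ (β + α) z
        rw [hsymm β, hsymm α, ← hadd, hsymm]
      have : (χ β z - 1) * ∑ α : G, χ α z = 0 := by linear_combination key
      rcases mul_eq_zero.mp this with h | h
      · exact absurd (sub_eq_zero.mp h) hβ
      · exact h
  -- compute the big sum
  have main : (∑ α : G, (∑ x : G, f x * χ α x) * ((∑ x : G, g x * χ α x)) ^ p ^ n)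
      = (Fintype.card G : F) * ∑ x : G, f x * (g x) ^ p ^ n := by
    have hpow : ∀ α : G, ((∑ x : G, g x * χ α x)) ^ p ^ n
        = ∑ y : G, (g y) ^ p ^ n * (χ α y)⁻¹ := by
      intro α
      have := map_sum (iterateFrobenius F p n) (fun x => g x * χ α x) Finset.univ
      simp only [iterateFrobenius_def, mul_pow] at this
      rw [this]
      exact Finset.sum_congr rfl fun y _ => by rw [hconj]
    calc (∑ α : G, (∑ x : G, f x * χ α x) * ((∑ x : G, g x * χ α x)) ^ p ^ n)
        = ∑ α : G, ∑ x : G, ∑ y : G,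
            f x * (g y) ^ p ^ n * χ α (x - y) := by
          refine Finset.sum_congr rfl fun α _ => ?_
          rw [hpow, Finset.sum_mul_sum]
          refine Finset.sum_congr rfl fun x _ => Finset.sum_congr rfl fun y _ => ?_
          rw [← hsub α x y]; ring
      _ = ∑ x : G, ∑ y : G, f x * (g y) ^ p ^ n * ∑ α : G, χ α (x - y) := by
          rw [Finset.sum_comm]
          refine Finset.sum_congr rfl fun x _ => ?_
          rw [Finset.sum_comm]
          refine Finset.sum_congr rfl fun y _ => ?_
          rw [Finset.mul_sum]
      _ = ∑ x : G, f x * (g x) ^ p ^ n * (Fintype.card G : F) := by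
          refine Finset.sum_congr rfl fun x _ => ?_
          rw [Finset.sum_eq_single x]
          · rw [horth, if_pos (sub_self x)]
          · intro y _ hy
            rw [horth, if_neg (sub_ne_zero.mpr (Ne.symm hy)), mul_zero]
          · intro h; exact absurd (Finset.mem_univ x) h
      _ = (Fintype.card G : F) * ∑ x : G, f x * (g x) ^ p ^ n := by
          rw [← Finset.sum_mul, mul_comm]
  rw [main, ← mul_assoc, inv_mul_cancel₀ hcardG, one_mul]
end

section
/- Parseval equation over GF(q): for f : G → GF(q), Σ_{x∈G} norm(f(x)) = (|G| mod p)^{-1} Σ_{α∈G} norm(f̂(α)); in particular, if f takes values in S(GF(q)) then Σ_{α∈G} norm(f̂(α)) = (|G| mod p)². -/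
/-- Parseval equation over `GF(q)`:
`∑ x, norm (f x) = (|G| mod p)⁻¹ * ∑ α, norm (f̂ α)`, where `norm y = y * y ^ (p ^ n)`;
in particular if `f` takes values in the unit circle then
`∑ α, norm (f̂ α) = (|G| mod p) ^ 2`. -/
theorem parseval (p n : ℕ) (hp : Nat.Prime p) (hn : n ≠ 0)
    (F : Type*) [Field F] [Fintype F] (hF : Fintype.card F = p ^ (2 * n))
    (G : Type*) [AddCommGroup G] [Fintype G]
    (hexp : ∀ x : G, (p ^ n + 1) • x = 0)
    (χ : G → G → F)
    (hadd : ∀ α x y : G, χ α (x + y) = χ α x * χ α y)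
    (hroot : ∀ α x : G, χ α x ^ (p ^ n + 1) = 1)
    (hsymm : ∀ α x : G, χ α x = χ x α)
    (hinj : ∀ α : G, (∀ x : G, χ α x = 1) → α = 0)
    (f : G → F) :
    (∑ x : G, f x * (f x) ^ p ^ n =
      (Fintype.card G : F)⁻¹ *
        ∑ α : G, (∑ x : G, f x * χ α x) * ((∑ x : G, f x * χ α x)) ^ p ^ n) ∧
    ((∀ x : G, f x * (f x) ^ p ^ n = 1) →
      ∑ α : G, (∑ x : G, f x * χ α x) * ((∑ x : G, f x * χ α x)) ^ p ^ n =
        (Fintype.card G : F) ^ 2) := by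
  classical
  haveI : Fact p.Prime := ⟨hp⟩
  -- characteristic of F is p
  obtain ⟨q, hq⟩ := CharP.exists F
  haveI := hq
  obtain ⟨m, hqp, hcard⟩ := FiniteField.card F q
  have hqdvd : q ∣ p ^ (2 * n) := by
    rw [← hF, hcard]; exact dvd_pow_self q m.ne_zero
  have hq_eq : q = p := (Nat.prime_dvd_prime_iff_eq hqp hp).mp (hqp.dvd_of_dvd_pow hqdvd)
  haveI hchar : CharP F p := hq_eq ▸ hq
  -- χ values are nonzero
  have hne : ∀ α x : G, χ α x ≠ 0 := by
    intro α x h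
    have := hroot α x
    rw [h, zero_pow (Nat.succ_ne_zero _)] at this
    exact zero_ne_one this
  have hχ0 : ∀ α : G, χ α 0 = 1 := by
    intro α
    have h := hadd α 0 0
    rw [add_zero] at h
    exact mul_left_cancel₀ (hne α 0) (h.symm.trans (mul_one (χ α 0)).symm)
  -- (χ α y)^(p^n) = χ α (-y)
  have hpowinv : ∀ α y : G, (χ α y) ^ p ^ n = χ α (-y) := by
    intro α y
    have h1 : χ α (-y) * χ α y = 1 := by rw [← hadd, neg_add_cancel, hχ0]
    have h2 : (χ α y) ^ p ^ n * χ α y = 1 := by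
      rw [← pow_succ]; exact hroot α y
    exact mul_right_cancel₀ (hne α y) (h2.trans h1.symm)
  -- orthogonality
  have horth : ∀ z : G, (∑ α : G, χ z α) = if z = 0 then (Fintype.card G : F) else 0 := by
    intro z
    by_cases hz : z = 0
    · subst hz
      simp only [if_true]
      rw [Finset.sum_congr rfl fun α _ => (hsymm 0 α).trans (hχ0 α)]
      simp
    · rw [if_neg hz]
      have hex : ∃ β : G, χ z β ≠ 1 := by
        by_contra h
        push_neg at h
        exact hz (hinj z h)
      obtain ⟨β, hβ⟩ := hex
      have h1 : (∑ α : G, χ z α) = (∑ α : G, χ z α) * χ z β := by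
        rw [Finset.sum_mul]
        calc (∑ α : G, χ z α) = ∑ α : G, χ z (α + β) :=
              (Fintype.sum_equiv (Equiv.addRight β) _ _ fun α => rfl).symm
          _ = ∑ α : G, χ z α * χ z β := by
              exact Finset.sum_congr rfl fun α _ => hadd z α β
      have : (∑ α : G, χ z α) * (χ z β - 1) = 0 := by
        rw [mul_sub, mul_one, ← h1, sub_self]
      rcases mul_eq_zero.mp this with h | h
      · exact h
      · exact absurd (sub_eq_zero.mp h) hβ
  -- card G nonzero in F
  have hGne : (Fintype.card G : F) ≠ 0 := by
    rw [Ne, CharP.cast_eq_zero_iff F p]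
    intro hdvd
    obtain ⟨x, hx⟩ := exists_prime_addOrderOf_dvd_card p hdvd
    have hdvd2 : p ∣ p ^ n + 1 := by
      have h2 := addOrderOf_dvd_of_nsmul_eq_zero (hexp x)
      rwa [hx] at h2
    have : p ∣ 1 := (Nat.dvd_add_right (dvd_pow_self p hn)).mp hdvd2
    exact hp.one_lt.ne' (Nat.dvd_one.mp this)
  -- Frobenius power n is a ring hom
  have hfrob : ∀ s : Finset G, ∀ g : G → F,
      (∑ x ∈ s, g x) ^ p ^ n = ∑ x ∈ s, (g x) ^ p ^ n := by
    intro s g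
    simpa only [iterateFrobenius_def] using map_sum (iterateFrobenius F p n) g s
  -- main computation
  have key : ∑ α : G, (∑ x : G, f x * χ α x) * ((∑ x : G, f x * χ α x)) ^ p ^ n
      = (Fintype.card G : F) * ∑ x : G, f x * (f x) ^ p ^ n := by
    have step1 : ∀ α : G,
        (∑ x : G, f x * χ α x) * ((∑ x : G, f x * χ α x)) ^ p ^ n
        = ∑ x : G, ∑ y : G, f x * (f y) ^ p ^ n * χ α (x - y) := by
      intro α
      rw [hfrob]
      rw [Finset.sum_mul_sum]
      refine Finset.sum_congr rfl fun x _ => Finset.sum_congr rfl fun y _ => ?_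
      rw [mul_pow, hpowinv, sub_eq_add_neg, hadd]
      ring
    rw [Finset.sum_congr rfl fun α _ => step1 α]
    rw [Finset.sum_comm]
    have step2 : ∀ x : G, (∑ α : G, ∑ y : G, f x * (f y) ^ p ^ n * χ α (x - y))
        = (Fintype.card G : F) * (f x * (f x) ^ p ^ n) := by
      intro x
      rw [Finset.sum_comm]
      have inner : ∀ y : G, (∑ α : G, f x * (f y) ^ p ^ n * χ α (x - y))
          = f x * (f y) ^ p ^ n * (if x - y = 0 then (Fintype.card G : F) else 0) := by
        intro y
        rw [← Finset.mul_sum, ← horth (x - y)]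
        congr 1
        exact Finset.sum_congr rfl fun α _ => (hsymm α (x - y)).symm ▸ hsymm (x - y) α
      rw [Finset.sum_congr rfl fun y _ => inner y]
      have : ∀ y : G, f x * (f y) ^ p ^ n * (if x - y = 0 then (Fintype.card G : F) else 0)
          = if y = x then f x * (f y) ^ p ^ n * (Fintype.card G : F) else 0 := by
        intro y
        by_cases h : y = x
        · simp [h]
        · rw [if_neg h, if_neg (fun hc => h (sub_eq_zero.mp hc).symm), mul_zero]
      rw [Finset.sum_congr rfl fun y _ => this y]
      rw [Finset.sum_ite_eq' Finset.univ x (fun y => f x * (f y) ^ p ^ n * (Fintype.card G : F))]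
      simp [mul_comm]
    rw [Finset.sum_congr rfl fun x _ => step2 x, ← Finset.mul_sum]
  constructor
  · rw [key, inv_mul_cancel_left₀ hGne]
  · intro hone
    rw [key, Finset.sum_congr rfl fun x _ => hone x]
    simp [sq]
end

section
/- A function f : G → S(GF(q)) is bent (i.e., norm(f̂(α)) = |G| mod p for all α ∈ G) if and only if for every α ∈ G with α ≠ 0_G, Σ_{x∈G} f(α + x)·(f(x))^{p^n} = 0. -/
/-- Combinatorial characterization of bentness over `GF(q)`: an `S(GF(q))`-valued
function `f` is bent (`norm (f̂ α) = |G| mod p` for all `α`) iff all its derivatives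
in nonzero directions sum to zero: `∑ x, f (α + x) * conj (f x) = 0` for `α ≠ 0`. -/
theorem bent_iff_derivatives (p n : ℕ) (hp : Nat.Prime p) (hn : n ≠ 0)
    (F : Type*) [Field F] [Fintype F] (hF : Fintype.card F = p ^ (2 * n))
    (G : Type*) [AddCommGroup G] [Fintype G]
    (hexp : ∀ x : G, (p ^ n + 1) • x = 0)
    (χ : G → G → F)
    (hadd : ∀ α x y : G, χ α (x + y) = χ α x * χ α y)
    (hroot : ∀ α x : G, χ α x ^ (p ^ n + 1) = 1)
    (hsymm : ∀ α x : G, χ α x = χ x α)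
    (hinj : ∀ α : G, (∀ x : G, χ α x = 1) → α = 0)
    (f : G → F) (hf : ∀ x : G, f x * (f x) ^ p ^ n = 1) :
    (∀ α : G, (∑ x : G, f x * χ α x) * ((∑ x : G, f x * χ α x)) ^ p ^ n =
        (Fintype.card G : F)) ↔
      (∀ α : G, α ≠ 0 → ∑ x : G, f (α + x) * (f x) ^ p ^ n = 0) := by
  classical
  haveI := Fact.mk hp
  -- the characteristic of F is p
  haveI hchar : CharP F p := by
    have h1 : (ringChar F).Prime := CharP.char_is_prime F (ringChar F)
    obtain ⟨m, -, hm⟩ := FiniteField.card F (ringChar F)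
    have hdvd : ringChar F ∣ p ^ (2 * n) := by
      rw [← hF, hm]
      exact dvd_pow_self _ (by exact_mod_cast m.ne_zero)
    have : ringChar F = p := by
      have := h1.dvd_of_dvd_pow hdvd
      exact ((Nat.prime_dvd_prime_iff_eq h1 hp).mp this)
    rw [← this]; exact ringChar.charP F
  haveI : ExpChar F p := ExpChar.prime hp
  -- basic facts about χ
  have hne : ∀ α x : G, χ α x ≠ 0 := by
    intro α x h
    have := hroot α x
    rw [h, zero_pow (Nat.succ_ne_zero _)] at this
    exact zero_ne_one this
  have hzero : ∀ α : G, χ α 0 = 1 := by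
    intro α
    have h := hadd α 0 0
    rw [add_zero] at h
    exact (mul_right_cancel₀ (hne α 0) (by rw [← h, one_mul])).symm
  have hpow : ∀ α x : G, χ α x ^ p ^ n = χ α (-x) := by
    intro α x
    have h1 : χ α x * χ α (-x) = 1 := by rw [← hadd, add_neg_cancel, hzero]
    have h2 : χ α x * χ α x ^ p ^ n = 1 := by
      have h := hroot α x
      rwa [pow_succ'] at h
    have := h1.trans h2.symm
    exact (mul_left_cancel₀ (hne α x) this).symm
  -- the derivative sum
  set D : G → F := fun β => ∑ y : G, f (β + y) * (f y) ^ p ^ n with hD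
  have hD0 : D 0 = (Fintype.card G : F) := by
    simp only [hD, zero_add]
    rw [Finset.sum_congr rfl fun y _ => hf y]
    simp [Finset.card_univ]
  -- key identity: the "norm" of the Fourier transform expands as a character sum of D
  have key : ∀ α : G,
      (∑ x : G, f x * χ α x) * ((∑ x : G, f x * χ α x)) ^ p ^ n
        = ∑ β : G, D β * χ α β := by
    intro α
    have hfrob : ((∑ x : G, f x * χ α x)) ^ p ^ n
        = ∑ y : G, (f y) ^ p ^ n * χ α (-y) := by
      have := map_sum (iterateFrobenius F p n) (fun x => f x * χ α x) Finset.univ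
      simp only [iterateFrobenius_def] at this
      rw [this]
      exact Finset.sum_congr rfl fun y _ => by rw [mul_pow, hpow]
    rw [hfrob, Finset.sum_mul_sum]
    rw [Finset.sum_comm]
    have step : ∀ y : G, ∑ x : G, f x * χ α x * ((f y) ^ p ^ n * χ α (-y))
        = ∑ β : G, f (β + y) * (f y) ^ p ^ n * χ α β := by
      intro y
      refine Fintype.sum_equiv (Equiv.subRight y) _ _ fun x => ?_
      simp only [Equiv.subRight_apply]
      have h1 : χ α (x - y) = χ α x * χ α (-y) := by rw [sub_eq_add_neg, hadd]
      rw [sub_add_cancel, h1]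
      ring
    rw [Finset.sum_congr rfl fun y _ => step y, Finset.sum_comm]
    refine Finset.sum_congr rfl fun β _ => ?_
    rw [hD, Finset.sum_mul]
  -- orthogonality
  have horth : ∀ β : G, β ≠ 0 → ∑ α : G, χ α β = 0 := by
    intro β hβ
    obtain ⟨γ, hγ⟩ : ∃ γ : G, χ γ β ≠ 1 := by
      by_contra h
      push_neg at h
      exact hβ (hinj β fun x => by rw [hsymm]; exact h x)
    have hshift : ∑ α : G, χ α β = χ γ β * ∑ α : G, χ α β := by
      rw [Finset.mul_sum]
      refine Fintype.sum_equiv (Equiv.subRight γ) _ _ fun α => ?_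
      simp only [Equiv.subRight_apply]
      have h1 : χ α β = χ (α - γ) β * χ γ β := by
        rw [hsymm (α - γ) β, hsymm γ β, ← hadd, sub_add_cancel, hsymm]
      rw [h1]; ring
    have : (χ γ β - 1) * ∑ α : G, χ α β = 0 := by
      rw [sub_mul, one_mul, ← hshift, sub_self]
    rcases mul_eq_zero.mp this with h | h
    · exact absurd (sub_eq_zero.mp h) hγ
    · exact h
  -- card G is nonzero in F
  have hcard : (Fintype.card G : F) ≠ 0 := by
    rw [Ne, CharP.cast_eq_zero_iff F p]
    intro hdvd
    obtain ⟨x, hx⟩ := exists_prime_addOrderOf_dvd_card p hdvd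
    have h1 : addOrderOf x ∣ p ^ n + 1 := addOrderOf_dvd_of_nsmul_eq_zero (hexp x)
    rw [hx] at h1
    have h2 : p ∣ p ^ n := dvd_pow_self p hn
    have : p ∣ 1 := (Nat.dvd_add_right h2).mp (by simpa [Nat.add_comm] using h1)
    exact hp.one_lt.ne' (Nat.dvd_one.mp this)
  constructor
  · -- bent → derivatives vanish
    intro hbent β₀ hβ₀
    have hβ₀' : -β₀ ≠ 0 := fun h => hβ₀ (by simpa using neg_eq_zero.mp h)
    have T1 : ∑ α : G, (∑ β : G, D β * χ α β) * χ α (-β₀)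
        = (Fintype.card G : F) * ∑ α : G, χ α (-β₀) := by
      rw [Finset.mul_sum]
      refine Finset.sum_congr rfl fun α _ => ?_
      rw [← key α, hbent α]
    have T2 : ∑ α : G, (∑ β : G, D β * χ α β) * χ α (-β₀)
        = D β₀ * (Fintype.card G : F) := by
      have expand : ∀ α : G, (∑ β : G, D β * χ α β) * χ α (-β₀)
          = ∑ β : G, D β * χ α (β - β₀) := by
        intro α
        rw [Finset.sum_mul]
        refine Finset.sum_congr rfl fun β _ => ?_
        rw [mul_assoc, ← hadd, sub_eq_add_neg]
      rw [Finset.sum_congr rfl fun α _ => expand α, Finset.sum_comm]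
      have inner : ∀ β : G, ∑ α : G, D β * χ α (β - β₀)
          = if β = β₀ then D β₀ * (Fintype.card G : F) else 0 := by
        intro β
        by_cases h : β = β₀
        · subst h
          simp only [sub_self, if_true]
          rw [← Finset.mul_sum]
          rw [Finset.sum_congr rfl fun α _ => hzero α]
          simp [Finset.card_univ]
        · rw [if_neg h, ← Finset.mul_sum, horth (β - β₀) (sub_ne_zero.mpr h), mul_zero]
      rw [Finset.sum_congr rfl fun β _ => inner β, Finset.sum_ite_eq' Finset.univ β₀]
      simp
    rw [T1, horth (-β₀) hβ₀', mul_zero] at T2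
    have := T2.symm
    rcases mul_eq_zero.mp this with h | h
    · exact h
    · exact absurd h hcard
  · -- derivatives vanish → bent
    intro hder α
    rw [key α]
    rw [Finset.sum_eq_single 0]
    · rw [hD0, hzero, mul_one]
    · intro β _ hβ
      rw [show D β = 0 from hder β hβ, zero_mul]
    · intro h; exact absurd (Finset.mem_univ 0) h
end

section
/- Let f : G → S(GF(q)) be bent and let s ∈ GF(p) satisfy s² = |G| mod p with s ≠ 0. Then the dual function f̃(α) = s^{-1}·f̂(α) takes values in S(GF(q)) and is itself bent. -/
/-- The dual of a bent function is bent: if `f : G → S(GF(q))` is bent and `s` is a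
nonzero square root of `|G| mod p` lying in the prime field `GF(p)` (i.e. `s ^ p = s`),
then `f̃ α = s⁻¹ * f̂ α` takes values in the unit circle and is itself bent. -/
theorem dual_bent (p n : ℕ) (hp : Nat.Prime p) (hn : n ≠ 0)
    (F : Type*) [Field F] [Fintype F] (hF : Fintype.card F = p ^ (2 * n))
    (G : Type*) [AddCommGroup G] [Fintype G]
    (hexp : ∀ x : G, (p ^ n + 1) • x = 0)
    (χ : G → G → F)
    (hadd : ∀ α x y : G, χ α (x + y) = χ α x * χ α y)
    (hroot : ∀ α x : G, χ α x ^ (p ^ n + 1) = 1)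
    (hsymm : ∀ α x : G, χ α x = χ x α)
    (hinj : ∀ α : G, (∀ x : G, χ α x = 1) → α = 0)
    (f : G → F) (hf : ∀ x : G, f x * (f x) ^ p ^ n = 1)
    (hbent : ∀ α : G, (∑ x : G, f x * χ α x) * ((∑ x : G, f x * χ α x)) ^ p ^ n =
      (Fintype.card G : F))
    (s : F) (hs0 : s ≠ 0) (hs2 : s ^ 2 = (Fintype.card G : F)) (hsp : s ^ p = s) :
    (∀ α : G,
      (s⁻¹ * ∑ x : G, f x * χ α x) * (s⁻¹ * ∑ x : G, f x * χ α x) ^ p ^ n = 1) ∧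
    (∀ α : G,
      (∑ x : G, (s⁻¹ * ∑ y : G, f y * χ x y) * χ α x) *
        ((∑ x : G, (s⁻¹ * ∑ y : G, f y * χ x y) * χ α x)) ^ p ^ n =
        (Fintype.card G : F)) := by
  -- s is fixed by the p^n power map
  have hsn' : ∀ k : ℕ, s ^ p ^ k = s := by
    intro k
    induction k with
    | zero => simp
    | succ m ih => rw [pow_succ, pow_mul, ih, hsp]
  have hsn : s ^ p ^ n = s := hsn' n
  have hcard : (Fintype.card G : F) = s ^ 2 := hs2.symm
  -- χ α 0 = 1
  have hχ0 : ∀ α : G, χ α 0 = 1 := by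
    intro α
    have hne : χ α 0 ≠ 0 := by
      intro h
      have := hroot α 0
      rw [h, zero_pow (by positivity)] at this
      exact zero_ne_one this
    have h1 : χ α 0 * χ α 0 = χ α 0 * 1 := by
      rw [← hadd, add_zero, mul_one]
    exact mul_left_cancel₀ hne h1
  -- orthogonality
  have horth : ∀ z : G, z ≠ 0 → (∑ x : G, χ x z) = 0 := by
    intro z hz
    obtain ⟨x0, hx0⟩ : ∃ x0, χ x0 z ≠ 1 := by
      by_contra h
      push_neg at h
      exact hz (hinj z fun x => by rw [hsymm]; exact h x)
    have key : χ x0 z * (∑ x : G, χ x z) = ∑ x : G, χ x z := by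
      rw [Finset.mul_sum]
      rw [← Equiv.sum_comp (Equiv.addLeft x0) (fun x => χ x z)]
      apply Finset.sum_congr rfl
      intro x _
      show χ x0 z * χ x z = χ (x0 + x) z
      rw [hsymm (x0 + x) z, hadd, hsymm z x0, hsymm z x]
    have : (χ x0 z - 1) * (∑ x : G, χ x z) = 0 := by
      rw [sub_mul, one_mul, key, sub_self]
    rcases mul_eq_zero.mp this with h | h
    · exact absurd (sub_eq_zero.mp h) hx0
    · exact h
  -- double Fourier transform
  have hdouble : ∀ α : G, (∑ x : G, (∑ y : G, f y * χ x y) * χ α x) =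
      (Fintype.card G : F) * f (-α) := by
    intro α
    have step1 : (∑ x : G, (∑ y : G, f y * χ x y) * χ α x) =
        ∑ y : G, f y * ∑ x : G, χ x (y + α) := by
      calc (∑ x : G, (∑ y : G, f y * χ x y) * χ α x)
          = ∑ x : G, ∑ y : G, f y * χ x (y + α) := by
            apply Finset.sum_congr rfl
            intro x _
            rw [Finset.sum_mul]
            apply Finset.sum_congr rfl
            intro y _
            rw [hadd, hsymm α x]; ring
        _ = ∑ y : G, ∑ x : G, f y * χ x (y + α) := Finset.sum_comm
        _ = ∑ y : G, f y * ∑ x : G, χ x (y + α) := by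
            simp [Finset.mul_sum]
    rw [step1]
    rw [Finset.sum_eq_single (-α)]
    · simp only [neg_add_cancel]
      have : (∑ x : G, χ x (0 : G)) = (Fintype.card G : F) := by
        simp [hχ0]
      rw [this, mul_comm]
    · intro y _ hy
      rw [horth (y + α) (fun h => hy (eq_neg_of_add_eq_zero_left h)), mul_zero]
    · intro h
      exact absurd (Finset.mem_univ _) h
  constructor
  · intro α
    rw [mul_pow, inv_pow, hsn]
    have h1 : (s⁻¹ * ∑ x : G, f x * χ α x) * (s⁻¹ * (∑ x : G, f x * χ α x) ^ p ^ n) =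
        s⁻¹ * s⁻¹ * ((∑ x : G, f x * χ α x) * (∑ x : G, f x * χ α x) ^ p ^ n) := by ring
    rw [h1, hbent α, hcard]
    field_simp
  · intro α
    have hsum : (∑ x : G, (s⁻¹ * ∑ y : G, f y * χ x y) * χ α x) = s * f (-α) := by
      calc (∑ x : G, (s⁻¹ * ∑ y : G, f y * χ x y) * χ α x)
          = s⁻¹ * ∑ x : G, (∑ y : G, f y * χ x y) * χ α x := by
            rw [Finset.mul_sum]; apply Finset.sum_congr rfl; intro x _; ring
        _ = s⁻¹ * ((Fintype.card G : F) * f (-α)) := by rw [hdouble]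
        _ = s * f (-α) := by
            rw [hcard, pow_two, ← mul_assoc, ← mul_assoc, inv_mul_cancel₀ hs0, one_mul]
    rw [hsum, mul_pow, hsn, hcard]
    calc s * f (-α) * (s * f (-α) ^ p ^ n) = s ^ 2 * (f (-α) * f (-α) ^ p ^ n) := by ring
      _ = s ^ 2 := by rw [hf (-α), mul_one]
end

section
/- Maiorana–McFarland construction: for any function g : G → S(GF(q)), the function f : G × G → S(GF(q)) defined by f(x, y) = χ_x(y)·g(y) is bent, i.e., norm(f̂(α,β)) = |G×G| mod p for all (α,β) ∈ G × G. -/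
/-- Maiorana–McFarland construction over `GF(q)`: for any `g : G → S(GF(q))`, the
function `f (x, y) = χ x y * g y` on `G × G` is bent: its Fourier transform (with
respect to the product pairing `χ_(α,β) (x,y) = χ α x * χ β y`) satisfies
`norm (f̂ (α, β)) = |G × G| mod p` for all `(α, β)`. -/
theorem maiorana_mcfarland (p n : ℕ) (hp : Nat.Prime p) (hn : n ≠ 0)
    (F : Type*) [Field F] [Fintype F] (hF : Fintype.card F = p ^ (2 * n))
    (G : Type*) [AddCommGroup G] [Fintype G]
    (hexp : ∀ x : G, (p ^ n + 1) • x = 0)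
    (χ : G → G → F)
    (hadd : ∀ α x y : G, χ α (x + y) = χ α x * χ α y)
    (hroot : ∀ α x : G, χ α x ^ (p ^ n + 1) = 1)
    (hsymm : ∀ α x : G, χ α x = χ x α)
    (hinj : ∀ α : G, (∀ x : G, χ α x = 1) → α = 0)
    (g : G → F) (hg : ∀ y : G, g y * (g y) ^ p ^ n = 1) :
    ∀ α β : G,
      (∑ x : G, ∑ y : G, (χ x y * g y) * (χ α x * χ β y)) *
        ((∑ x : G, ∑ y : G, (χ x y * g y) * (χ α x * χ β y))) ^ p ^ n =
        (Fintype.card (G × G) : F) := by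
  haveI : Fact p.Prime := ⟨hp⟩
  -- characteristic of F is p
  have hdvd : p ∣ ringChar F := by
    rw [prime_dvd_char_iff_dvd_card, hF]
    exact dvd_pow_self p (by omega)
  have hchar : ringChar F = p := by
    rcases CharP.char_is_prime_or_zero F (ringChar F) with h | h
    · exact ((Nat.prime_dvd_prime_iff_eq hp h).mp hdvd).symm
    · exact absurd h (CharP.char_ne_zero_of_finite F (ringChar F))
  haveI hcp : CharP F p := ringChar.of_eq hchar
  -- natural casts are fixed by x ↦ x ^ p ^ n
  have hnat0 : ∀ m k : ℕ, (m : F) ^ p ^ k = (m : F) := by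
    intro m k
    induction k with
    | zero => simp
    | succ k ih =>
      rw [pow_succ, pow_mul, ih]
      have := map_natCast (frobenius F p) m
      rwa [frobenius_def] at this
  have hnat : ∀ m : ℕ, (m : F) ^ p ^ n = (m : F) := fun m => hnat0 m n
  -- orthogonality
  have horth : ∀ c : G, c ≠ 0 → ∑ x : G, χ x c = 0 := by
    intro c hc
    obtain ⟨x0, hx0⟩ : ∃ x0, χ x0 c ≠ 1 := by
      by_contra h
      push_neg at h
      exact hc (hinj c (fun x => by rw [hsymm]; exact h x))
    have hshift : ∑ x : G, χ x c = ∑ x : G, χ (x + x0) c :=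
      (Fintype.sum_equiv (Equiv.addRight x0) _ _ (fun x => rfl)).symm
    have : ∑ x : G, χ (x + x0) c = χ x0 c * ∑ x : G, χ x c := by
      rw [Finset.mul_sum]
      refine Finset.sum_congr rfl fun x _ => ?_
      rw [← hsymm c (x + x0), hadd, hsymm c x, hsymm c x0, mul_comm]
    have h2 : ∑ x : G, χ x c = χ x0 c * ∑ x : G, χ x c := hshift.trans this
    have h3 : (χ x0 c - 1) * ∑ x : G, χ x c = 0 := by linear_combination -h2
    rcases mul_eq_zero.mp h3 with h | h
    · exact absurd (sub_eq_zero.mp h) hx0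
    · exact h
  intro α β
  -- compute the Fourier coefficient
  have hS : (∑ x : G, ∑ y : G, (χ x y * g y) * (χ α x * χ β y)) =
      (Fintype.card G : F) * (g (-α) * χ β (-α)) := by
    rw [Finset.sum_comm]
    have step : ∀ y : G, (∑ x : G, (χ x y * g y) * (χ α x * χ β y)) =
        (g y * χ β y) * ∑ x : G, χ x (y + α) := by
      intro y
      rw [Finset.mul_sum]
      refine Finset.sum_congr rfl fun x _ => ?_
      rw [hadd x y α, ← hsymm α x]
      ring
    calc (∑ y : G, ∑ x : G, (χ x y * g y) * (χ α x * χ β y))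
        = ∑ y : G, (g y * χ β y) * ∑ x : G, χ x (y + α) :=
          Finset.sum_congr rfl fun y _ => step y
      _ = (Fintype.card G : F) * (g (-α) * χ β (-α)) := by
          rw [Finset.sum_eq_single (-α)]
          · rw [neg_add_cancel]
            have hone : ∀ x : G, χ x (0 : G) = 1 := by
              intro x
              have h := hadd x 0 0
              rw [add_zero] at h
              have hne : χ x 0 ≠ 0 := by
                intro h0
                have := hroot x 0
                rw [h0, zero_pow (by positivity)] at this
                exact zero_ne_one this
              have := mul_left_cancel₀ hne (by rw [← h, mul_one] :
                χ x 0 * 1 = χ x 0 * χ x 0)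
              exact this.symm
            simp only [hone, Finset.sum_const, Finset.card_univ, nsmul_eq_mul, mul_one]
            ring
          · intro y _ hy
            rw [horth (y + α) (fun h => hy (eq_neg_of_add_eq_zero_left h)), mul_zero]
          · intro h; exact absurd (Finset.mem_univ _) h
  rw [hS, mul_pow, hnat]
  have ht : (g (-α) * χ β (-α)) * (g (-α) * χ β (-α)) ^ p ^ n = 1 := by
    have h1 := hg (-α)
    have h2 : χ β (-α) * (χ β (-α)) ^ p ^ n = 1 := by
      rw [← pow_succ']
      exact hroot β (-α)
    have h3 : (g (-α) * (g (-α)) ^ p ^ n) * (χ β (-α) * (χ β (-α)) ^ p ^ n) = 1 := by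
      rw [h1, h2, one_mul]
    rw [mul_pow]
    linear_combination h3
  rw [Fintype.card_prod, Nat.cast_mul]
  linear_combination ((Fintype.card G : F)) ^ 2 * ht
end
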